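/- Let (c_n)_{n≥1} be a sequence of positive integers with c_n dividing c_{n+1} for all n ≥ 1. Let q_0′ ∈ ℤ and let (q_n′)_{n≥1} be a sequence of rational numbers satisfying: (1) q_n′ ≤ 1 for all n ≥ 1; (2) if q_1′ = 1 then q_2′ ≠ 0; (3) if q_m′ = 0 for some m ≥ 1 then q_n′ = 0 for all n ≥ m; (4) there is a sequence (a_n′)_{n≥1} of positive integers with a′_{n+1} ≥ (c_{n+1}/c_n) · a_n′ · (a_n′ + 1) for all n ≥ 1 such that q_n′ = c_n/a_n′ whenever q_n′ ≠ 0; (5) for every n, if q′_{n+1} ≠ 0 then either q′_{n+2} ≠ 0 or a′_{n+1} > (c_{n+1}/c_n) · a_n′ · (a_n′ + 1). Then, setting α = q_0′ + Σ_{k=1}^∞ (−1)^{k−1} q_k′ (which converges), the generalized alternating-Sylvester expansion of α with respect to (c_n) produces exactly the sequence (q_n′)_{n≥0}, i.e., q_n = q_n′ for all n ≥ 0. -/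

import Mathlib

open Filter Topology

/-- The rational value `c/⌊c/x⌋` used at each step (0 if `x = 0`). -/
noncomputable def gasQaux (cn : ℕ) (x : ℝ) : ℝ :=
  if x = 0 then 0 else (cn : ℝ) / (⌊(cn : ℝ) / x⌋ : ℝ)

/-- `gasA c α n` is `A_n` of the generalized alternating-Sylvester expansion of `α`
(for `n ≥ 1`; the value at `0` is a dummy). `A_1 = α - ⌊α⌋`, `A_{n+1} = q_n - A_n`. -/
noncomputable def gasA (c : ℕ → ℕ) (α : ℝ) : ℕ → ℝ
  | 0 => 0
  | 1 => α - ⌊α⌋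
  | n + 2 => gasQaux (c (n + 1)) (gasA c α (n + 1)) - gasA c α (n + 1)

/-- `gasQ c α n` is `q_n`: `q_0 = ⌊α⌋`; for `n ≥ 1`, `q_n = c_n / a_n` if `A_n ≠ 0`, else `0`. -/
noncomputable def gasQ (c : ℕ → ℕ) (α : ℝ) : ℕ → ℝ
  | 0 => (⌊α⌋ : ℤ)
  | n + 1 => gasQaux (c (n + 1)) (gasA c α (n + 1))

/-- `gasa c α n` is `a_n = ⌊c_n / A_n⌋` (meaningful when `A_n ≠ 0`). -/
noncomputable def gasa (c : ℕ → ℕ) (α : ℝ) (n : ℕ) : ℤ :=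
  ⌊(c n : ℝ) / gasA c α n⌋

private lemma alt_decay (p : ℕ → ℝ) (hh : ∀ k, p (k+1) ≤ p k / 2) :
    ∀ k, p k ≤ p 0 * (1/2)^k := by
  intro k
  induction k with
  | zero => simp
  | succ k ih =>
    calc p (k+1) ≤ p k / 2 := hh k
    _ ≤ (p 0 * (1/2)^k) / 2 := by linarith
    _ = p 0 * (1/2)^(k+1) := by ring

private lemma alt_summable_abs (p : ℕ → ℝ) (hnn : ∀ k, 0 ≤ p k) (hh : ∀ k, p (k+1) ≤ p k / 2) :
    Summable p := by
  apply Summable.of_nonneg_of_le hnn (alt_decay p hh)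
  exact summable_geometric_two.mul_left _

private lemma alt_summable (p : ℕ → ℝ) (hnn : ∀ k, 0 ≤ p k) (hh : ∀ k, p (k+1) ≤ p k / 2) :
    Summable (fun k => (-1:ℝ)^k * p k) := by
  apply Summable.of_abs
  have : (fun k => |(-1:ℝ)^k * p k|) = p := by
    funext k
    simp [abs_mul, abs_pow, abs_of_nonneg (hnn k)]
  rw [this]
  exact alt_summable_abs p hnn hh

set_option maxHeartbeats 1000000 in
private lemma alt_nonneg (p : ℕ → ℝ) (hnn : ∀ k, 0 ≤ p k) (hh : ∀ k, p (k+1) ≤ p k / 2) :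
    0 ≤ ∑' k, (-1:ℝ)^k * p k := by
  have hs := alt_summable_abs p hnn hh
  have hi1 : Function.Injective (fun k : ℕ => 2*k) := fun a b h => by simp only [] at h; omega
  have hi2 : Function.Injective (fun k : ℕ => 2*k+1) := fun a b h => by simp only [] at h; omega
  have he : Summable (fun k => p (2*k)) := hs.comp_injective hi1
  have ho : Summable (fun k => p (2*k+1)) := hs.comp_injective hi2
  have he' : Summable (fun k : ℕ => (-1:ℝ)^(2*k) * p (2*k)) := by
    simpa [pow_mul] using he
  have ho' : Summable (fun k : ℕ => (-1:ℝ)^(2*k+1) * p (2*k+1)) := by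
    simpa [pow_mul, pow_succ] using ho.neg
  rw [← tsum_even_add_odd he' ho']
  have h1 : ∑' k : ℕ, (-1:ℝ)^(2*k) * p (2*k) = ∑' k, p (2*k) := by
    apply tsum_congr; intro k; simp [pow_mul]
  have h2 : ∑' k : ℕ, (-1:ℝ)^(2*k+1) * p (2*k+1) = -∑' k, p (2*k+1) := by
    rw [← tsum_neg]; apply tsum_congr; intro k; simp [pow_mul, pow_succ]
  have h3 : ∑' k, p (2*k+1) ≤ ∑' k, p (2*k) :=
    Summable.tsum_le_tsum (fun k => (hh (2*k)).trans (by linarith [hnn (2*k)])) ho he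
  rw [h1, h2]; linarith

private lemma alt_rec (p : ℕ → ℝ) (hnn : ∀ k, 0 ≤ p k) (hh : ∀ k, p (k+1) ≤ p k / 2) :
    ∑' k, (-1:ℝ)^k * p k = p 0 - ∑' k, (-1:ℝ)^k * p (k+1) := by
  have hs := alt_summable p hnn hh
  rw [Summable.tsum_eq_zero_add hs]
  have h1 : ∀ k : ℕ, (-1:ℝ)^(k+1) * p (k+1) = -((-1:ℝ)^k * p (k+1)) := by
    intro k; ring
  simp only [h1]
  rw [tsum_neg]
  ring

theorem gas_T_eq_S (c : ℕ → ℕ) (hc : ∀ n, 1 ≤ n → 0 < c n)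
    (hdvd : ∀ n, 1 ≤ n → c n ∣ c (n + 1))
    (q0' : ℤ) (q' : ℕ → ℚ) (a' : ℕ → ℕ)
    (h1 : ∀ n, 1 ≤ n → q' n ≤ 1)
    (h2 : q' 1 = 1 → q' 2 ≠ 0)
    (h3 : ∀ m, 1 ≤ m → q' m = 0 → ∀ n, m ≤ n → q' n = 0)
    (ha'pos : ∀ n, 1 ≤ n → 0 < a' n)
    (ha'grow : ∀ n, 1 ≤ n →
      ((c (n + 1) : ℚ) / (c n : ℚ)) * (a' n : ℚ) * ((a' n : ℚ) + 1) ≤ (a' (n + 1) : ℚ))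
    (h4 : ∀ n, 1 ≤ n → q' n ≠ 0 → q' n = (c n : ℚ) / (a' n : ℚ))
    (h5 : ∀ n, 1 ≤ n → q' (n + 1) ≠ 0 → q' (n + 2) ≠ 0 ∨
      ((c (n + 1) : ℚ) / (c n : ℚ)) * (a' n : ℚ) * ((a' n : ℚ) + 1) < (a' (n + 1) : ℚ)) :
    ∃ α : ℝ,
      Tendsto (fun N : ℕ => (q0' : ℝ) + ∑ k ∈ Finset.range N, (-1 : ℝ) ^ k * (q' (k + 1) : ℝ))
        atTop (𝓝 α) ∧
      gasQ c α 0 = (q0' : ℝ) ∧ (∀ n, 1 ≤ n → gasQ c α n = (q' n : ℝ)) := by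
  set p : ℕ → ℝ := fun n => ((q' n : ℚ) : ℝ) with hpdef
  have hcpos : ∀ n, 1 ≤ n → (0:ℝ) < (c n : ℝ) := fun n hn => by exact_mod_cast hc n hn
  have hapos : ∀ n, 1 ≤ n → (0:ℝ) < (a' n : ℝ) := fun n hn => by exact_mod_cast ha'pos n hn
  have hage1 : ∀ n, 1 ≤ n → (1:ℝ) ≤ (a' n : ℝ) := fun n hn => by
    exact_mod_cast Nat.one_le_iff_ne_zero.mpr (ha'pos n hn).ne'
  have hpval : ∀ n, 1 ≤ n → q' n ≠ 0 → p n = (c n : ℝ) / (a' n : ℝ) := by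
    intro n hn h0
    simp only [hpdef]
    rw [h4 n hn h0]
    push_cast
    ring
  have hpzero : ∀ n, 1 ≤ n → q' n = 0 → p n = 0 := by
    intro n hn h0; simp [hpdef, h0]
  have hppos : ∀ n, 1 ≤ n → q' n ≠ 0 → 0 < p n := by
    intro n hn h0
    rw [hpval n hn h0]
    exact div_pos (hcpos n hn) (hapos n hn)
  have hpnn : ∀ n, 1 ≤ n → 0 ≤ p n := by
    intro n hn
    by_cases h0 : q' n = 0
    · rw [hpzero n hn h0]
    · exact (hppos n hn h0).le
  -- upper bound of next term by c_n / (a_n (a_n+1))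
  have hB : ∀ n, 1 ≤ n → q' n ≠ 0 → q' (n+1) ≠ 0 →
      p (n+1) ≤ (c n : ℝ) / ((a' n : ℝ) * ((a' n : ℝ) + 1)) := by
    intro n hn h0 h1'
    have hgrow : ((c (n+1) : ℝ) / (c n : ℝ)) * (a' n : ℝ) * ((a' n : ℝ) + 1) ≤ (a' (n+1) : ℝ) := by
      have hq := ha'grow n hn
      rw [← Rat.cast_le (K := ℝ)] at hq
      push_cast at hq
      exact hq
    have hrpos : (0:ℝ) < ((c (n+1) : ℝ) / (c n : ℝ)) * (a' n : ℝ) * ((a' n : ℝ) + 1) := by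
      have := hcpos n hn; have := hcpos (n+1) (by omega); have := hapos n hn
      positivity
    rw [hpval (n+1) (by omega) h1']
    have step1 : (c (n+1) : ℝ) / (a' (n+1) : ℝ) ≤
        (c (n+1) : ℝ) / (((c (n+1) : ℝ) / (c n : ℝ)) * (a' n : ℝ) * ((a' n : ℝ) + 1)) := by
      exact div_le_div_of_nonneg_left (hcpos (n+1) (by omega)).le hrpos hgrow
    have step2 : (c (n+1) : ℝ) / (((c (n+1) : ℝ) / (c n : ℝ)) * (a' n : ℝ) * ((a' n : ℝ) + 1))
        = (c n : ℝ) / ((a' n : ℝ) * ((a' n : ℝ) + 1)) := by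
      have c1 := (hcpos n hn).ne'
      have c2 := (hcpos (n+1) (by omega)).ne'
      have a1 := (hapos n hn).ne'
      have a2 : ((a' n : ℝ) + 1) ≠ 0 := by positivity
      field_simp
    linarith
  have hBstrict : ∀ n, 1 ≤ n → q' n ≠ 0 → q' (n+1) ≠ 0 →
      ((c (n + 1) : ℚ) / (c n : ℚ)) * (a' n : ℚ) * ((a' n : ℚ) + 1) < (a' (n + 1) : ℚ) →
      p (n+1) < (c n : ℝ) / ((a' n : ℝ) * ((a' n : ℝ) + 1)) := by
    intro n hn h0 h1' hst
    have hgrow : ((c (n+1) : ℝ) / (c n : ℝ)) * (a' n : ℝ) * ((a' n : ℝ) + 1) < (a' (n+1) : ℝ) := by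
      rw [← Rat.cast_lt (K := ℝ)] at hst
      push_cast at hst
      exact hst
    have hrpos : (0:ℝ) < ((c (n+1) : ℝ) / (c n : ℝ)) * (a' n : ℝ) * ((a' n : ℝ) + 1) := by
      have := hcpos n hn; have := hcpos (n+1) (by omega); have := hapos n hn
      positivity
    rw [hpval (n+1) (by omega) h1']
    have step1 : (c (n+1) : ℝ) / (a' (n+1) : ℝ) <
        (c (n+1) : ℝ) / (((c (n+1) : ℝ) / (c n : ℝ)) * (a' n : ℝ) * ((a' n : ℝ) + 1)) :=
      div_lt_div_of_pos_left (hcpos (n+1) (by omega)) hrpos hgrow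
    have step2 : (c (n+1) : ℝ) / (((c (n+1) : ℝ) / (c n : ℝ)) * (a' n : ℝ) * ((a' n : ℝ) + 1))
        = (c n : ℝ) / ((a' n : ℝ) * ((a' n : ℝ) + 1)) := by
      have c1 := (hcpos n hn).ne'
      have c2 := (hcpos (n+1) (by omega)).ne'
      have a1 := (hapos n hn).ne'
      have a2 : ((a' n : ℝ) + 1) ≠ 0 := by positivity
      field_simp
    linarith
  have hB2 : ∀ n, 1 ≤ n →
      (c n : ℝ) / ((a' n : ℝ) * ((a' n : ℝ) + 1)) ≤ (c n : ℝ) / (a' n : ℝ) / 2 := by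
    intro n hn
    rw [div_div]
    apply div_le_div_of_nonneg_left (hcpos n hn).le
    · have := hapos n hn; positivity
    · nlinarith [hage1 n hn]
  have hphalf : ∀ n, 1 ≤ n → p (n+1) ≤ p n / 2 := by
    intro n hn
    by_cases h0 : q' n = 0
    · rw [hpzero n hn h0, hpzero (n+1) (by omega) (h3 n hn h0 (n+1) (by omega))]
      norm_num
    by_cases h1' : q' (n+1) = 0
    · rw [hpzero (n+1) (by omega) h1']
      linarith [hpnn n hn]
    · have := hB n hn h0 h1'
      have := hB2 n hn
      rw [hpval n hn h0]
      linarith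
  -- shifted sequences
  have hPnn : ∀ n, 1 ≤ n → ∀ k, 0 ≤ p (n+k) := fun n hn k => hpnn (n+k) (by omega)
  have hPh : ∀ n, 1 ≤ n → ∀ k, p (n+(k+1)) ≤ p (n+k) / 2 := by
    intro n hn k
    have := hphalf (n+k) (by omega)
    rwa [show n+(k+1) = (n+k)+1 by omega]
  set A : ℕ → ℝ := fun n => ∑' k, (-1:ℝ)^k * p (n+k) with hAdef
  have hAs : ∀ n, 1 ≤ n → Summable (fun k => (-1:ℝ)^k * p (n+k)) := fun n hn =>
    alt_summable (fun k => p (n+k)) (hPnn n hn) (hPh n hn)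
  have hArec : ∀ n, 1 ≤ n → A n = p n - A (n+1) := by
    intro n hn
    have h := alt_rec (fun k => p (n+k)) (hPnn n hn) (hPh n hn)
    simp only [Nat.add_zero] at h
    have h2' : ∑' k : ℕ, (-1:ℝ)^k * p (n+(k+1)) = A (n+1) := by
      apply tsum_congr
      intro k
      rw [show n+(k+1) = (n+1)+k by omega]
    rw [hAdef]
    simp only []
    rw [h, h2']
  have hAnn : ∀ n, 1 ≤ n → 0 ≤ A n := fun n hn =>
    alt_nonneg (fun k => p (n+k)) (hPnn n hn) (hPh n hn)
  have hAub : ∀ n, 1 ≤ n → A n ≤ p n := by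
    intro n hn
    rw [hArec n hn]
    linarith [hAnn (n+1) (by omega)]
  have hAzero : ∀ n, 1 ≤ n → q' n = 0 → A n = 0 := by
    intro n hn h0
    have hz : ∀ k : ℕ, p (n+k) = 0 := fun k =>
      hpzero (n+k) (by omega) (h3 n hn h0 (n+k) (by omega))
    rw [hAdef]
    simp only [hz, mul_zero, tsum_zero]
  have hApos : ∀ n, 1 ≤ n → q' n ≠ 0 → 0 < A n := by
    intro n hn h0
    rw [hArec n hn]
    have := hAub (n+1) (by omega)
    have := hphalf n hn
    have := hppos n hn h0
    linarith
  have hAlb : ∀ n, 1 ≤ n → q' n ≠ 0 → (c n : ℝ) / ((a' n : ℝ) + 1) < A n := by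
    intro n hn h0
    have key : A (n+1) < (c n : ℝ) / ((a' n : ℝ) * ((a' n : ℝ) + 1)) := by
      by_cases h1' : q' (n+1) = 0
      · rw [hAzero (n+1) (by omega) h1']
        have := hcpos n hn; have := hapos n hn
        positivity
      · rcases h5 n hn h1' with h2' | h2'
        · have hlt : A (n+1) < p (n+1) := by
            rw [hArec (n+1) (by omega)]
            linarith [hApos (n+2) (by omega) h2']
          linarith [hB n hn h0 h1']
        · linarith [hAub (n+1) (by omega), hBstrict n hn h0 h1' h2']
    rw [hArec n hn, hpval n hn h0]
    have hid : (c n : ℝ) / (a' n : ℝ) - (c n : ℝ) / ((a' n : ℝ) * ((a' n : ℝ) + 1))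
        = (c n : ℝ) / ((a' n : ℝ) + 1) := by
      have a1 := (hapos n hn).ne'
      have a2 : ((a' n : ℝ) + 1) ≠ 0 := by positivity
      field_simp
      ring
    linarith
  have hQaux : ∀ n, 1 ≤ n → gasQaux (c n) (A n) = p n := by
    intro n hn
    by_cases h0 : q' n = 0
    · rw [hAzero n hn h0, hpzero n hn h0]
      simp [gasQaux]
    · have hA0 := hApos n hn h0
      have hlb := hAlb n hn h0
      have hub : A n ≤ (c n : ℝ) / (a' n : ℝ) := by
        rw [← hpval n hn h0]; exact hAub n hn
      have hfl : ⌊(c n : ℝ) / A n⌋ = (a' n : ℤ) := by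
        rw [Int.floor_eq_iff]
        constructor
        · rw [le_div_iff₀ hA0]
          have h' := (le_div_iff₀ (hapos n hn)).mp hub
          push_cast
          nlinarith
        · rw [div_lt_iff₀ hA0]
          have h' := (div_lt_iff₀ (by positivity : (0:ℝ) < (a' n : ℝ) + 1)).mp hlb
          push_cast
          nlinarith
      rw [gasQaux, if_neg hA0.ne', hfl, hpval n hn h0]
      push_cast
      ring
  -- the limit
  refine ⟨(q0' : ℝ) + A 1, ?_, ?_, ?_⟩
  · have ht := ((hAs 1 le_rfl).hasSum.tendsto_sum_nat).const_add (q0' : ℝ)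
    apply ht.congr
    intro N
    congr 1
    apply Finset.sum_congr rfl
    intro k _
    rw [show 1+k = k+1 by omega]
  · have h01 : (0:ℝ) ≤ A 1 := hAnn 1 le_rfl
    have h11 : A 1 < 1 := by
      by_cases h0 : q' 1 = 0
      · rw [hAzero 1 le_rfl h0]; norm_num
      · by_cases he : q' 1 = 1
        · have h2' := h2 he
          have hpos2 := hApos 2 (by omega) h2'
          have hrec := hArec 1 le_rfl
          have hp1 : p 1 = 1 := by simp [hpdef, he]
          linarith
        · have hlt : p 1 < 1 := by
            have : q' 1 < 1 := lt_of_le_of_ne (h1 1 le_rfl) he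
            simp only [hpdef]
            exact_mod_cast this
          linarith [hAub 1 le_rfl]
    have hfloor : ⌊(q0' : ℝ) + A 1⌋ = q0' := by
      rw [add_comm, Int.floor_add_intCast, Int.floor_eq_zero_iff.mpr ⟨h01, h11⟩, zero_add]
    show ((⌊(q0' : ℝ) + A 1⌋ : ℤ) : ℝ) = (q0' : ℝ)
    rw [hfloor]
  · have h01 : (0:ℝ) ≤ A 1 := hAnn 1 le_rfl
    have h11 : A 1 < 1 := by
      by_cases h0 : q' 1 = 0
      · rw [hAzero 1 le_rfl h0]; norm_num
      · by_cases he : q' 1 = 1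
        · have h2' := h2 he
          have hpos2 := hApos 2 (by omega) h2'
          have hrec := hArec 1 le_rfl
          have hp1 : p 1 = 1 := by simp [hpdef, he]
          linarith
        · have hlt : p 1 < 1 := by
            have : q' 1 < 1 := lt_of_le_of_ne (h1 1 le_rfl) he
            simp only [hpdef]
            exact_mod_cast this
          linarith [hAub 1 le_rfl]
    have hfloor : ⌊(q0' : ℝ) + A 1⌋ = q0' := by
      rw [add_comm, Int.floor_add_intCast, Int.floor_eq_zero_iff.mpr ⟨h01, h11⟩, zero_add]
    have hgasA : ∀ n, 1 ≤ n → gasA c ((q0' : ℝ) + A 1) n = A n := by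
      intro n hn
      induction n with
      | zero => omega
      | succ m ih =>
        rcases Nat.eq_zero_or_pos m with rfl | hm
        · show ((q0' : ℝ) + A 1) - (⌊(q0' : ℝ) + A 1⌋ : ℤ) = A 1
          rw [hfloor]
          ring
        · obtain ⟨k, rfl⟩ : ∃ k, m = k + 1 := ⟨m - 1, by omega⟩
          have ihm := ih (by omega)
          show gasQaux (c (k+1)) (gasA c ((q0' : ℝ) + A 1) (k+1)) -
              gasA c ((q0' : ℝ) + A 1) (k+1) = A (k+2)
          rw [ihm, hQaux (k+1) (by omega)]
          have := hArec (k+1) (by omega)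
          linarith
    intro n hn
    obtain ⟨m, rfl⟩ : ∃ m, n = m + 1 := ⟨n - 1, by omega⟩
    show gasQaux (c (m+1)) (gasA c ((q0' : ℝ) + A 1) (m+1)) = ((q' (m+1) : ℚ) : ℝ)
    rw [hgasA (m+1) hn, hQaux (m+1) hn]
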